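/- Let $(R,\mathfrak{m})$ be a two-dimensional regular local ring with regular system of parameters $x, y$, and integers $0 < \alpha < \beta < n$ with $n + \alpha = 2\beta$, $n \leq \alpha + \beta$, $\beta \leq 2\alpha$. Set $I = (x^3, x^2y^{\alpha}, xy^{\beta}, y^n)$ and $J = (x^2, xy^{n-\beta}, y^{n-\alpha})$. Then $IJ = I(x^2 - y^{n-\alpha}) + x^3 J$ and $\mathfrak{m}J = \mathfrak{m}(x^2 - y^{n-\alpha}) + yJ$. -/

import Mathlib

open Ideal IsLocalRing Submodule

lemma ag_aux {R : Type*} [CommRing R] (x y : R) (g a : ℕ) :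
    (Ideal.span {x ^ 3, x ^ 2 * y ^ (g + 1 + a), x * y ^ (2 * g + a + 2),
        y ^ (3 * g + a + 3)} : Ideal R) *
        Ideal.span {x ^ 2, x * y ^ (g + 1), y ^ (2 * g + 2)} =
      Ideal.span {x ^ 3, x ^ 2 * y ^ (g + 1 + a), x * y ^ (2 * g + a + 2), y ^ (3 * g + a + 3)} *
          Ideal.span {x ^ 2 - y ^ (2 * g + 2)} +
        Ideal.span {x ^ 3} * Ideal.span {x ^ 2, x * y ^ (g + 1), y ^ (2 * g + 2)} ∧
      (Ideal.span {x, y} : Ideal R) * Ideal.span {x ^ 2, x * y ^ (g + 1), y ^ (2 * g + 2)} =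
        Ideal.span {x, y} * Ideal.span {x ^ 2 - y ^ (2 * g + 2)} +
          Ideal.span {y} * Ideal.span {x ^ 2, x * y ^ (g + 1), y ^ (2 * g + 2)} := by
  set I : Ideal R :=
    Ideal.span {x ^ 3, x ^ 2 * y ^ (g + 1 + a), x * y ^ (2 * g + a + 2), y ^ (3 * g + a + 3)}
    with hI
  set J : Ideal R := Ideal.span {x ^ 2, x * y ^ (g + 1), y ^ (2 * g + 2)} with hJ
  set c : R := x ^ 2 - y ^ (2 * g + 2) with hc
  -- memberships
  have hJ1 : x ^ 2 ∈ J := Ideal.subset_span (by simp)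
  have hJ2 : x * y ^ (g + 1) ∈ J := Ideal.subset_span (by simp)
  have hJ3 : y ^ (2 * g + 2) ∈ J := Ideal.subset_span (by simp)
  have hI1 : x ^ 3 ∈ I := Ideal.subset_span (by simp)
  have hI2 : x ^ 2 * y ^ (g + 1 + a) ∈ I := Ideal.subset_span (by simp)
  have hI3 : x * y ^ (2 * g + a + 2) ∈ I := Ideal.subset_span (by simp)
  have hI4 : y ^ (3 * g + a + 3) ∈ I := Ideal.subset_span (by simp)
  have hcJ : c ∈ J := sub_mem hJ1 hJ3
  have hcc : c ∈ Ideal.span {c} := Ideal.mem_span_singleton_self c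
  have hx3 : x ^ 3 ∈ Ideal.span {x ^ 3} := Ideal.mem_span_singleton_self _
  have hyy : y ∈ Ideal.span {y} := Ideal.mem_span_singleton_self y
  have hMx : x ∈ Ideal.span {x, y} := Ideal.subset_span (by simp)
  have hMy : y ∈ Ideal.span {x, y} := Ideal.subset_span (by simp)
  constructor
  · apply le_antisymm
    · rw [hI, hJ, Ideal.span_mul_span']
      apply Ideal.span_le.2
      rintro p ⟨u, hu, v, hv, rfl⟩
      simp only [Set.mem_insert_iff, Set.mem_singleton_iff] at hu hv
      have m1 : ∀ j ∈ J, x ^ 3 * j ∈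
          I * Ideal.span {c} + Ideal.span {x ^ 3} * J := fun j hj =>
        Submodule.mem_sup_right (Ideal.mul_mem_mul hx3 hj)
      have mP1 : x ^ 3 * (y ^ a * (x * y ^ (g + 1))) - x ^ 2 * y ^ (g + 1 + a) * c ∈
          I * Ideal.span {c} + Ideal.span {x ^ 3} * J :=
        sub_mem (Submodule.mem_sup_right (Ideal.mul_mem_mul hx3 (Ideal.mul_mem_left _ _ hJ2)))
          (Submodule.mem_sup_left (Ideal.mul_mem_mul hI2 hcc))
      rcases hu with h | h | h | h <;> rcases hv with h' | h' | h' <;> rw [h, h'] <;> dsimp only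
      · exact m1 _ hJ1
      · exact m1 _ hJ2
      · exact m1 _ hJ3
      · -- x²y^α * x² = x³ * (y^a * (x y^{g+1}))
        rw [show x ^ 2 * y ^ (g + 1 + a) * x ^ 2 = x ^ 3 * (y ^ a * (x * y ^ (g + 1))) by ring]
        exact Submodule.mem_sup_right (Ideal.mul_mem_mul hx3 (Ideal.mul_mem_left _ _ hJ2))
      · rw [show x ^ 2 * y ^ (g + 1 + a) * (x * y ^ (g + 1)) =
            x ^ 3 * (y ^ a * y ^ (2 * g + 2)) by ring]
        exact Submodule.mem_sup_right (Ideal.mul_mem_mul hx3 (Ideal.mul_mem_left _ _ hJ3))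
      · rw [show x ^ 2 * y ^ (g + 1 + a) * y ^ (2 * g + 2) =
            x ^ 3 * (y ^ a * (x * y ^ (g + 1))) - x ^ 2 * y ^ (g + 1 + a) * c by rw [hc]; ring]
        exact mP1
      · rw [show x * y ^ (2 * g + a + 2) * x ^ 2 = x ^ 3 * (y ^ a * y ^ (2 * g + 2)) by ring]
        exact Submodule.mem_sup_right (Ideal.mul_mem_mul hx3 (Ideal.mul_mem_left _ _ hJ3))
      · rw [show x * y ^ (2 * g + a + 2) * (x * y ^ (g + 1)) =
            x ^ 3 * (y ^ a * (x * y ^ (g + 1))) - x ^ 2 * y ^ (g + 1 + a) * c by rw [hc]; ring]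
        exact mP1
      · rw [show x * y ^ (2 * g + a + 2) * y ^ (2 * g + 2) =
            x ^ 3 * (y ^ a * y ^ (2 * g + 2)) - x * y ^ (2 * g + a + 2) * c by rw [hc]; ring]
        exact sub_mem
          (Submodule.mem_sup_right (Ideal.mul_mem_mul hx3 (Ideal.mul_mem_left _ _ hJ3)))
          (Submodule.mem_sup_left (Ideal.mul_mem_mul hI3 hcc))
      · rw [show y ^ (3 * g + a + 3) * x ^ 2 =
            x ^ 3 * (y ^ a * (x * y ^ (g + 1))) - x ^ 2 * y ^ (g + 1 + a) * c by rw [hc]; ring]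
        exact mP1
      · rw [show y ^ (3 * g + a + 3) * (x * y ^ (g + 1)) =
            x ^ 3 * (y ^ a * y ^ (2 * g + 2)) - x * y ^ (2 * g + a + 2) * c by rw [hc]; ring]
        exact sub_mem
          (Submodule.mem_sup_right (Ideal.mul_mem_mul hx3 (Ideal.mul_mem_left _ _ hJ3)))
          (Submodule.mem_sup_left (Ideal.mul_mem_mul hI3 hcc))
      · rw [show y ^ (3 * g + a + 3) * y ^ (2 * g + 2) =
            x ^ 3 * (y ^ a * (x * y ^ (g + 1))) - x ^ 2 * y ^ (g + 1 + a) * c -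
              y ^ (3 * g + a + 3) * c by rw [hc]; ring]
        exact sub_mem mP1 (Submodule.mem_sup_left (Ideal.mul_mem_mul hI4 hcc))
    · apply sup_le
      · exact mul_le_mul_right (Ideal.span_le.2 (by simpa using hcJ)) _
      · exact mul_le_mul_left (Ideal.span_le.2 (by simpa using hI1)) _
  · apply le_antisymm
    · rw [hJ, Ideal.span_mul_span']
      apply Ideal.span_le.2
      rintro p ⟨u, hu, v, hv, rfl⟩
      simp only [Set.mem_insert_iff, Set.mem_singleton_iff] at hu hv
      have my : ∀ j ∈ J, y * j ∈
          Ideal.span {x, y} * Ideal.span {c} + Ideal.span {y} * J := fun j hj =>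
        Submodule.mem_sup_right (Ideal.mul_mem_mul hyy hj)
      rcases hu with h | h <;> rcases hv with h' | h' | h' <;> rw [h, h'] <;> dsimp only
      · rw [show x * x ^ 2 = x * c + y * (y ^ g * (x * y ^ (g + 1))) by rw [hc]; ring]
        exact add_mem (Submodule.mem_sup_left (Ideal.mul_mem_mul hMx hcc))
          (Submodule.mem_sup_right (Ideal.mul_mem_mul hyy (Ideal.mul_mem_left _ _ hJ2)))
      · rw [show x * (x * y ^ (g + 1)) =
            y ^ g * y * c + y * (y ^ g * y ^ (2 * g + 2)) by rw [hc]; ring]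
        exact add_mem
          (Submodule.mem_sup_left (Ideal.mul_mem_mul (Ideal.mul_mem_left _ _ hMy) hcc))
          (Submodule.mem_sup_right (Ideal.mul_mem_mul hyy (Ideal.mul_mem_left _ _ hJ3)))
      · rw [show x * y ^ (2 * g + 2) = y * (y ^ g * (x * y ^ (g + 1))) by ring]
        exact Submodule.mem_sup_right (Ideal.mul_mem_mul hyy (Ideal.mul_mem_left _ _ hJ2))
      · exact my _ hJ1
      · exact my _ hJ2
      · exact my _ hJ3
    · apply sup_le
      · exact mul_le_mul_right (Ideal.span_le.2 (by simpa using hcJ)) _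
      · exact mul_le_mul_left (Ideal.span_le.2 (by simpa using hMy)) _

/-- For `0 < α < β < n` with `n + α = 2β`, `n ≤ α + β`, `β ≤ 2α`,
`I = (x³, x²yᵅ, xyᵝ, yⁿ)` and `J = (x², xy^(n-β), y^(n-α))`:
`IJ = I(x² - y^(n-α)) + x³J` and `𝔪J = 𝔪(x² - y^(n-α)) + yJ`. -/
theorem almost_gorenstein_identities {R : Type*} [CommRing R] [IsDomain R] [IsNoetherianRing R]
    [IsLocalRing R] (x y : R) (hm : maximalIdeal R = Ideal.span {x, y})
    (hdim : ringKrullDim R = 2)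
    (α β n : ℕ) (hα : 0 < α) (hαβ : α < β) (hβn : β < n)
    (h1 : n + α = 2 * β) (h2 : n ≤ α + β) (h3 : β ≤ 2 * α)
    (I J : Ideal R)
    (hI : I = Ideal.span {x ^ 3, x ^ 2 * y ^ α, x * y ^ β, y ^ n})
    (hJ : J = Ideal.span {x ^ 2, x * y ^ (n - β), y ^ (n - α)}) :
    I * J = I * Ideal.span {x ^ 2 - y ^ (n - α)} + Ideal.span {x ^ 3} * J ∧
      maximalIdeal R * J =
        maximalIdeal R * Ideal.span {x ^ 2 - y ^ (n - α)} + Ideal.span {y} * J := by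
  set g : ℕ := β - α - 1 with hg
  set a : ℕ := α - g - 1 with ha
  have e1 : n - α = 2 * g + 2 := by omega
  have e2 : n - β = g + 1 := by omega
  have e3 : α = g + 1 + a := by omega
  have e4 : β = 2 * g + a + 2 := by omega
  have e5 : n = 3 * g + a + 3 := by omega
  rw [hm, hI, hJ, e1, e2, e3, e4, e5]
  exact ag_aux x y g a
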